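/- Given a minimum weight cover C of G, define C' on the nodes of the unfolded graph φ(G) by C'(u^i) = 1 if i ≤ C(u) and C'(u^i) = 0 otherwise. Then C' is a (0,1)-valued vertex cover of the unweighted graph φ(G), i.e., every edge u^i v^j of φ(G) has C'(u^i) = 1 or C'(v^j) = 1; moreover Σ C'(u^i) = Σ_u C(u). -/
import Mathlib


open Finset

variable {V : Type*} [Fintype V] [DecidableEq V]

/-- `C` is a (weighted vertex) cover of the bipartite graph on parts `X`, `Y`
with edge weights `w` (where `w x y = 0` means no edge). -/
def IsCover (X Y : Finset V) (w : V → V → ℕ) (C : V → ℕ) : Prop :=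
  ∀ x ∈ X, ∀ y ∈ Y, w x y ≤ C x + C y

/-- The weight of a cover: the sum of its values over all nodes. -/
def coverWt (X Y : Finset V) (C : V → ℕ) : ℕ := ∑ u ∈ X ∪ Y, C u

/-- `M` is a matching of the weighted bipartite graph: a set of pairwise
node-disjoint edges, each going from `X` to `Y` with positive weight. -/
def IsBMatching (X Y : Finset V) (w : V → V → ℕ) (M : Finset (V × V)) : Prop :=
  (∀ e ∈ M, e.1 ∈ X ∧ e.2 ∈ Y ∧ 0 < w e.1 e.2) ∧
  (∀ e ∈ M, ∀ f ∈ M, e ≠ f → e.1 ≠ f.1 ∧ e.2 ≠ f.2)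

/-- The total weight of a matching. -/
def mWt (w : V → V → ℕ) (M : Finset (V × V)) : ℕ := ∑ e ∈ M, w e.1 e.2

/-- Adjacency in the unfolded graph `φ(G)`: the copies `u^i` of a node `u` are the
pairs `(u, i)` with `i ≥ 1`, and for each edge `uv` of weight `β = w u v` the
unfolded graph has the (unweighted) edges `u^i v^{β+1-i}` for `1 ≤ i ≤ β`. -/
def phiAdj (X Y : Finset V) (w : V → V → ℕ) (a b : V × ℕ) : Prop :=
  (a.1 ∈ X ∧ b.1 ∈ Y ∧ 1 ≤ a.2 ∧ 1 ≤ b.2 ∧ 0 < w a.1 b.1 ∧ a.2 + b.2 = w a.1 b.1 + 1) ∨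
  (b.1 ∈ X ∧ a.1 ∈ Y ∧ 1 ≤ b.2 ∧ 1 ≤ a.2 ∧ 0 < w b.1 a.1 ∧ b.2 + a.2 = w b.1 a.1 + 1)

/-- `M` is a matching (set of pairwise node-disjoint edges) of the unweighted
graph with adjacency relation `adj`. -/
def IsUMatching {α : Type*} (adj : α → α → Prop) (M : Finset (α × α)) : Prop :=
  (∀ e ∈ M, adj e.1 e.2) ∧ (∀ e ∈ M, e.1 ≠ e.2) ∧
  (∀ e ∈ M, ∀ f ∈ M, e ≠ f →
    e.1 ≠ f.1 ∧ e.1 ≠ f.2 ∧ e.2 ≠ f.1 ∧ e.2 ≠ f.2)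

/-- The unfolding `φ(M)` of a matching `M` of `G`: each edge `uv ∈ M` of weight
`β` contributes the edges `u^1 v^β, …, u^β v^1`. -/
def phiM (w : V → V → ℕ) (M : Finset (V × V)) : Finset ((V × ℕ) × (V × ℕ)) :=
  M.biUnion fun e =>
    (Finset.Icc 1 (w e.1 e.2)).image fun i => ((e.1, i), (e.2, w e.1 e.2 + 1 - i))

/-- The number of copies of a node `u` in the unfolded graph: the maximum weight
of an edge incident to `u`. -/
def alphaCopies (X Y : Finset V) (w : V → V → ℕ) (u : V) : ℕ :=
  (X ∪ Y).sup fun v => max (w u v) (w v u)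

/-- Folding a minimum weight cover `C` of `G` into a (0,1)-valued vertex cover of
the unfolded graph `φ(G)`: `C'(u^i) = 1` iff `i ≤ C(u)`.  Every edge of `φ(G)`
is covered, and the total value of `C'` equals the weight of `C`. -/
theorem unfolded_cover
    (X Y : Finset V) (hXY : Disjoint X Y) (w : V → V → ℕ)
    (C : V → ℕ) (hC : IsCover X Y w C)
    (hCmin : ∀ C' : V → ℕ, IsCover X Y w C' → coverWt X Y C ≤ coverWt X Y C') :
    (∀ a b : V × ℕ, phiAdj X Y w a b →
      (if 1 ≤ a.2 ∧ a.2 ≤ C a.1 then 1 else 0) = 1 ∨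
      (if 1 ≤ b.2 ∧ b.2 ≤ C b.1 then 1 else 0) = 1) ∧
    (∑ u ∈ X ∪ Y, ∑ i ∈ Finset.Icc 1 (alphaCopies X Y w u),
        (if 1 ≤ i ∧ i ≤ C u then 1 else 0)) = ∑ u ∈ X ∪ Y, C u := by
  -- C u ≤ alphaCopies u for u ∈ X ∪ Y, by minimality
  have hCov : IsCover X Y w (fun u => min (C u) (alphaCopies X Y w u)) := by
    intro x hx y hy
    have h1 : w x y ≤ alphaCopies X Y w x :=
      le_trans (le_max_left _ _) (Finset.le_sup (f := fun v => max (w x v) (w v x))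
        (Finset.mem_union_right X hy))
    have h2 : w x y ≤ alphaCopies X Y w y :=
      le_trans (le_max_right _ _) (Finset.le_sup (f := fun v => max (w y v) (w v y))
        (Finset.mem_union_left Y hx))
    have h3 := hC x hx y hy
    simp only
    omega
  have hle : ∀ u ∈ X ∪ Y, C u ≤ alphaCopies X Y w u := by
    have hsum := hCmin _ hCov
    have hptle : ∀ u ∈ X ∪ Y, min (C u) (alphaCopies X Y w u) ≤ C u :=
      fun u _ => min_le_left _ _
    have heq : ∑ u ∈ X ∪ Y, min (C u) (alphaCopies X Y w u) = ∑ u ∈ X ∪ Y, C u :=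
      le_antisymm (Finset.sum_le_sum hptle) hsum
    intro u hu
    have := (Finset.sum_eq_sum_iff_of_le hptle).mp heq u hu
    omega
  constructor
  · rintro a b (⟨ha, hb, h1, h2, hpos, hsum⟩ | ⟨hb, ha, h1, h2, hpos, hsum⟩) <;>
      [have hw := hC a.1 ha b.1 hb; have hw := hC b.1 hb a.1 ha] <;>
    · by_cases hca : a.2 ≤ C a.1
      · left; rw [if_pos ⟨by omega, hca⟩]
      · right; rw [if_pos ⟨by omega, by omega⟩]
  · refine Finset.sum_congr rfl fun u hu => ?_
    have h := hle u hu
    rw [← Finset.sum_filter]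
    have : Finset.filter (fun i => 1 ≤ i ∧ i ≤ C u) (Finset.Icc 1 (alphaCopies X Y w u))
        = Finset.Icc 1 (C u) := by
      ext i; simp only [Finset.mem_filter, Finset.mem_Icc]; omega
    rw [this, Finset.sum_const, Nat.card_Icc, smul_eq_mul, mul_one]
    omega
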